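/- Fix n ≥ 1 and 1 ≤ r ≤ n. The number of pairs (X, x), where X = (T_1,…,T_k) is an ordered set partition of an n-element set and x is an element of the r-th block T_r (so in particular k ≥ r), equals n · ∑_{i=r}^{n} (i−1)! · S(n,i). Equivalently, the probability that a uniformly random element of a uniformly random ordered set partition of an n-element set has rank r is P_{n,r} = (1/B_n) ∑_{i=r}^{n} (i−1)! S(n,i). -/

import Mathlib

open Finset PowerSeries Filter Nat

/-- `L` is an ordered set partition of the finite set `S`: a finite sequence of pairwise
disjoint nonempty subsets of `S` whose union is `S`. -/
def IsOrderedSetPartition {α : Type*} [DecidableEq α] (S : Finset α) (L : List (Finset α)) :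
    Prop :=
  (∀ T ∈ L, T ≠ ∅) ∧ L.Pairwise Disjoint ∧ L.foldr (· ∪ ·) ∅ = S

/-- The type of ordered set partitions of the finite set `S`. -/
def OrderedSetPartition {α : Type*} [DecidableEq α] (S : Finset α) :=
  {L : List (Finset α) // IsOrderedSetPartition S L}

/-- The ordered Bell number `B n`: the number of ordered set partitions of an `n`-element set. -/
noncomputable def orderedBell (n : ℕ) : ℕ :=
  Nat.card (OrderedSetPartition (Finset.univ : Finset (Fin n)))

/-- A hierarchical ordering (society) on the finite set `S`: an (unordered) set partition of `S`
into nonempty blocks, together with an ordered set partition of each block. -/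
def HierarchicalOrdering {α : Type*} [DecidableEq α] (S : Finset α) :=
  (P : Finpartition S) × ((b : P.parts) → OrderedSetPartition (b : Finset α))

/-- `H n`: the number of hierarchical orderings on an `n`-element set. -/
noncomputable def hier (n : ℕ) : ℕ :=
  Nat.card (HierarchicalOrdering (Finset.univ : Finset (Fin n)))


/-- The Stirling number of the second kind `S(n,k)`: the number of partitions of an
`n`-element set into `k` nonempty blocks. -/
noncomputable def stirling2 (n k : ℕ) : ℕ :=
  Nat.card {P : Finpartition (Finset.univ : Finset (Fin n)) // P.parts.card = k}


section EnumCount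
variable {β : Type*} [DecidableEq β]

/-- lists enumerating a finset -/
private abbrev Enum (F : Finset β) := {l : List β // l.Nodup ∧ l.toFinset = F}

lemma enum_length {F : Finset β} (l : Enum F) : l.1.length = F.card := by
  have := List.toFinset_card_of_nodup l.2.1
  rw [l.2.2] at this; exact this.symm

noncomputable def enumOfEquiv (F : Finset β) (e : Fin F.card ≃ {x // x ∈ F}) : Enum F :=
  ⟨List.ofFn (fun i => (e i : β)),
    List.nodup_ofFn.mpr (fun i j hij => e.injective (Subtype.ext hij)),
    by
      ext a
      simp only [List.mem_toFinset, List.mem_ofFn, Set.mem_range]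
      constructor
      · rintro ⟨i, rfl⟩; exact (e i).2
      · intro ha; exact ⟨e.symm ⟨a, ha⟩, by simp⟩⟩

lemma enumOfEquiv_bijective (F : Finset β) : Function.Bijective (enumOfEquiv F) := by
  constructor
  · intro e e' h
    have hl : (List.ofFn fun i => (e i : β)) = List.ofFn fun i => (e' i : β) :=
      congrArg Subtype.val h
    ext i
    have h3 := congrArg (fun l : List β => l[(i : ℕ)]?) hl
    simp only [List.getElem?_ofFn, i.2, dif_pos] at h3
    simpa using h3
  · rintro ⟨l, hnd, htf⟩
    have hlen : l.length = F.card := by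
      rw [← htf]; exact (List.toFinset_card_of_nodup hnd).symm
    have hmem : ∀ i : Fin F.card, l.get (Fin.cast hlen.symm i) ∈ F := fun i => by
      have : l.get (Fin.cast hlen.symm i) ∈ l.toFinset := List.mem_toFinset.mpr (l.get_mem _)
      rwa [htf] at this
    set f0 : Fin F.card → {x // x ∈ F} := fun i => ⟨l.get (Fin.cast hlen.symm i), hmem i⟩ with hf0
    have hinj : Function.Injective f0 := by
      intro i j hij
      have := List.nodup_iff_injective_get.mp hnd (congrArg Subtype.val hij)
      simpa [Fin.ext_iff] using this
    have hbij : Function.Bijective f0 :=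
      (Fintype.bijective_iff_injective_and_card f0).mpr ⟨hinj, by simp⟩
    refine ⟨Equiv.ofBijective f0 hbij, ?_⟩
    apply Subtype.ext
    apply List.ext_getElem (by simp [enumOfEquiv, hlen])
    intro i h1 h2
    simp [enumOfEquiv, Equiv.ofBijective, List.getElem_ofFn, hf0]

instance enum_finite (F : Finset β) : Finite (Enum F) :=
  Finite.of_surjective _ (enumOfEquiv_bijective F).surjective

lemma nat_card_enum (F : Finset β) : Nat.card (Enum F) = F.card ! := by
  rw [← Nat.card_eq_of_bijective _ (enumOfEquiv_bijective F), Nat.card_eq_fintype_card,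
    Fintype.card_equiv F.equivFin.symm, Fintype.card_fin]

end EnumCount
section EnumAtCount
variable {β : Type*} [DecidableEq β]

private def EnumAt (F : Finset β) (j : ℕ) (d b : β) :=
  {l : List β // (l.Nodup ∧ l.toFinset = F) ∧ l.getD j d = b}

instance enumAt_finite (F : Finset β) (j : ℕ) (d b : β) : Finite (EnumAt F j d b) :=
  Finite.of_injective (fun l => (⟨l.1, l.2.1⟩ : Enum F))
    (fun a b h => Subtype.ext (congrArg (fun x : Enum F => x.1) h))

private lemma list_toFinset_map {γ : Type*} [DecidableEq γ] (f : β → γ) (l : List β) :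
    (l.map f).toFinset = l.toFinset.image f := by
  ext a; simp

lemma nat_card_sigma' {ι : Type*} [Fintype ι] (f : ι → Type*) [∀ i, Finite (f i)] :
    Nat.card (Σ i, f i) = ∑ i, Nat.card (f i) := by
  letI : ∀ i, Fintype (f i) := fun i => Fintype.ofFinite _
  simp [Nat.card_eq_fintype_card]

lemma image_swap_eq_self {F : Finset β} {b b' : β} (hb : b ∈ F) (hb' : b' ∈ F) :
    F.image (Equiv.swap b b') = F := by
  have hswap : ∀ a ∈ F, Equiv.swap b b' a ∈ F := by
    intro a ha
    rcases eq_or_ne a b with rfl | h1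
    · rwa [Equiv.swap_apply_left]
    rcases eq_or_ne a b' with rfl | h2
    · rwa [Equiv.swap_apply_right]
    · rwa [Equiv.swap_apply_of_ne_of_ne h1 h2]
  ext a
  simp only [Finset.mem_image]
  constructor
  · rintro ⟨c, hc, rfl⟩; exact hswap c hc
  · intro ha
    exact ⟨Equiv.swap b b' a, hswap a ha, Equiv.swap_apply_self _ _ _⟩

/-- map an enumeration with `b` at slot `j` to one with `b'` there, by swapping. -/
private def swapEnumAt (F : Finset β) (j : ℕ) (hj : j < F.card) (d : β) {b b' : β}
    (hb : b ∈ F) (hb' : b' ∈ F) (l : EnumAt F j d b) : EnumAt F j d b' := by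
  refine ⟨l.1.map (Equiv.swap b b'), ⟨l.2.1.1.map (Equiv.injective _), ?_⟩, ?_⟩
  · rw [list_toFinset_map, l.2.1.2]
    exact image_swap_eq_self hb hb'
  · have hlen : j < l.1.length := by
      have := List.toFinset_card_of_nodup l.2.1.1
      rw [l.2.1.2] at this
      omega
    rw [List.getD_eq_getElem _ _ (by simpa using hlen), List.getElem_map,
      ← List.getD_eq_getElem _ d hlen, l.2.2, Equiv.swap_apply_left]

lemma nat_card_enumAt_const (F : Finset β) (j : ℕ) (hj : j < F.card) (d : β) {b b' : β}
    (hb : b ∈ F) (hb' : b' ∈ F) :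
    Nat.card (EnumAt F j d b) = Nat.card (EnumAt F j d b') := by
  have key : ∀ (c c' : β) (hc : c ∈ F) (hc' : c' ∈ F) (l : EnumAt F j d c),
      swapEnumAt F j hj d hc' hc (swapEnumAt F j hj d hc hc' l) = l := by
    intro c c' hc hc' l
    apply Subtype.ext
    show (l.1.map (Equiv.swap c c')).map (Equiv.swap c' c) = l.1
    rw [Equiv.swap_comm c' c, List.map_map]
    simp [Function.comp_def, Equiv.swap_apply_self]
  exact Nat.card_congr ⟨swapEnumAt F j hj d hb hb', swapEnumAt F j hj d hb' hb,
    key b b' hb hb', key b' b hb' hb⟩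

lemma nat_card_enumAt (F : Finset β) {j : ℕ} (hj : j < F.card) (d : β) {b : β} (hb : b ∈ F) :
    Nat.card (EnumAt F j d b) = (F.card - 1)! := by
  have hk : 0 < F.card := Nat.pos_of_ne_zero (by omega)
  -- the sigma decomposition
  have hdec : Nat.card (Enum F) = ∑ c : {x // x ∈ F}, Nat.card (EnumAt F j d c.1) := by
    rw [← nat_card_sigma']
    refine (Nat.card_eq_of_bijective
      (fun (q : Σ c : {x // x ∈ F}, EnumAt F j d c.1) => (⟨q.2.1, q.2.2.1⟩ : Enum F)) ?_).symm
    constructor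
    · rintro ⟨⟨c, hc⟩, ⟨l, hl, hat⟩⟩ ⟨⟨c', hc'⟩, ⟨l', hl', hat'⟩⟩ h
      have hll : l = l' := congrArg Subtype.val h
      subst hll
      have hcc : c = c' := hat.symm.trans hat'
      subst hcc
      rfl
    · rintro ⟨l, hnd, htf⟩
      have hlen : j < l.length := by
        have := List.toFinset_card_of_nodup hnd
        rw [htf] at this; omega
      have hmem : l.getD j d ∈ F := by
        have : l.getD j d ∈ l.toFinset := by
          rw [List.getD_eq_getElem _ d hlen]
          exact List.mem_toFinset.mpr (List.getElem_mem _)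
        rwa [htf] at this
      exact ⟨⟨⟨l.getD j d, hmem⟩, ⟨l, ⟨hnd, htf⟩, rfl⟩⟩, rfl⟩
  have hconst : ∀ c : {x // x ∈ F}, Nat.card (EnumAt F j d c.1) = Nat.card (EnumAt F j d b) :=
    fun c => nat_card_enumAt_const F j hj d c.2 hb
  rw [nat_card_enum, Finset.sum_congr rfl (fun c _ => hconst c), Finset.sum_const,
    Finset.card_univ, Fintype.card_coe, smul_eq_mul] at hdec
  have := Nat.mul_factorial_pred (Nat.pos_iff_ne_zero.mp hk)
  exact Nat.eq_of_mul_eq_mul_left hk (by omega)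

end EnumAtCount
section OSPAux
variable {α : Type*} [DecidableEq α]

lemma foldr_union_eq_sup (L : List (Finset α)) : L.foldr (· ∪ ·) ∅ = L.toFinset.sup id := by
  induction L with
  | nil => simp
  | cons a L ih => simp [ih, Finset.sup_insert]

lemma osp_nodup {S : Finset α} {L : List (Finset α)} (h : IsOrderedSetPartition S L) :
    L.Nodup := by
  rw [List.nodup_iff_injective_get]
  intro i j hij
  by_contra hne
  have hmem : L.get i ∈ L := L.get_mem _
  have hne' : L.get i ≠ ∅ := h.1 _ hmem
  have hpg := List.pairwise_iff_get.mp h.2.1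
  rcases Ne.lt_or_gt (fun h' : i = j => hne h') with h' | h'
  · have hd := hpg i j h'
    rw [← hij] at hd
    exact hne' (by simpa using disjoint_self.mp hd)
  · have hd := hpg j i h'
    rw [← hij] at hd
    exact hne' (by simpa using disjoint_self.mp hd)

/-- The unordered partition underlying an ordered set partition. -/
def ospPartition {S : Finset α} (L : List (Finset α)) (h : IsOrderedSetPartition S L) :
    Finpartition S where
  parts := L.toFinset
  supIndep := Finset.supIndep_iff_pairwiseDisjoint.mpr (fun a ha b hb hab =>
    letI : Std.Symm (Disjoint : Finset α → Finset α → Prop) := ⟨fun _ _ hd => hd.symm⟩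
    h.2.1.forall (List.mem_toFinset.mp ha) (List.mem_toFinset.mp hb) hab)
  sup_parts := by rw [← foldr_union_eq_sup]; exact h.2.2
  bot_notMem := fun hc => h.1 _ (List.mem_toFinset.mp hc) (by simpa using rfl)

lemma isOSP_of_enum {S : Finset α} (P : Finpartition S) {l : List (Finset α)}
    (hnd : l.Nodup) (htf : l.toFinset = P.parts) : IsOrderedSetPartition S l := by
  refine ⟨?_, ?_, ?_⟩
  · intro T hT
    have hT' : T ∈ P.parts := by rw [← htf]; exact List.mem_toFinset.mpr hT
    simpa using P.ne_bot hT'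
  · exact hnd.pairwise_of_forall_ne (fun a ha b hb hab =>
      P.disjoint (by rw [← htf]; exact List.mem_toFinset.mpr ha)
        (by rw [← htf]; exact List.mem_toFinset.mpr hb) hab)
  · rw [foldr_union_eq_sup, htf]; exact P.sup_parts

end OSPAux

section Fib

private def Fib (n j : ℕ) (P : Finpartition (Finset.univ : Finset (Fin n))) :=
  {q : List (Finset (Fin n)) × Fin n //
    (q.1.Nodup ∧ q.1.toFinset = P.parts) ∧ q.2 ∈ q.1.getD j ∅}

instance fib_finite (n j : ℕ) (P : Finpartition (Finset.univ : Finset (Fin n))) :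
    Finite (Fib n j P) :=
  Finite.of_injective
    (fun q => ((⟨q.1.1, q.2.1⟩ : Enum P.parts), q.1.2))
    (fun a b h => by
      apply Subtype.ext
      have h1 : a.1.1 = b.1.1 := congrArg (fun x : Enum P.parts × Fin n => x.1.1) h
      have h2 : a.1.2 = b.1.2 := congrArg (fun x : Enum P.parts × Fin n => x.2) h
      exact Prod.ext h1 h2)

private lemma fib_length {n : ℕ} {P : Finpartition (Finset.univ : Finset (Fin n))}
    {l : List (Finset (Fin n))} (hnd : l.Nodup) (htf : l.toFinset = P.parts) :
    l.length = P.parts.card := by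
  have := List.toFinset_card_of_nodup hnd
  rw [htf] at this
  omega

private lemma nat_card_fib_lt (n j : ℕ) (P : Finpartition (Finset.univ : Finset (Fin n)))
    (h : P.parts.card ≤ j) : Nat.card (Fib n j P) = 0 := by
  have : IsEmpty (Fib n j P) := ⟨by
    rintro ⟨⟨l, x⟩, ⟨hnd, htf⟩, hx⟩
    have hlen := fib_length hnd htf
    rw [List.getD_eq_default _ _ (by omega)] at hx
    simp at hx⟩
  exact Nat.card_of_isEmpty

private lemma nat_card_fib_ge (n j : ℕ) (P : Finpartition (Finset.univ : Finset (Fin n)))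
    (h : j < P.parts.card) : Nat.card (Fib n j P) = (P.parts.card - 1)! * n := by
  have hcongr : Nat.card (Fib n j P) =
      Nat.card (Σ b : {x // x ∈ P.parts}, EnumAt P.parts j ∅ b.1 × {y : Fin n // y ∈ b.1}) := by
    refine (Nat.card_eq_of_bijective
      (fun s : Σ b : {x // x ∈ P.parts}, EnumAt P.parts j ∅ b.1 × {y : Fin n // y ∈ b.1} =>
        (⟨(s.2.1.1, s.2.2.1), ⟨s.2.1.2.1, by rw [s.2.1.2.2]; exact s.2.2.2⟩⟩ : Fib n j P))
      ⟨?_, ?_⟩).symm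
    · rintro ⟨⟨b, hb⟩, ⟨⟨l, hl, hat⟩, ⟨y, hy⟩⟩⟩ ⟨⟨b', hb'⟩, ⟨⟨l', hl', hat'⟩, ⟨y', hy'⟩⟩⟩ h
      have hll : l = l' := congrArg (fun q : Fib n j P => q.1.1) h
      have hyy : y = y' := congrArg (fun q : Fib n j P => q.1.2) h
      subst hll; subst hyy
      have hbb : b = b' := hat.symm.trans hat'
      subst hbb
      rfl
    · intro q
      have hlen := fib_length q.2.1.1 q.2.1.2
      have hmem : q.1.1.getD j ∅ ∈ P.parts := by
        have : q.1.1.getD j ∅ ∈ q.1.1.toFinset := by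
          rw [List.getD_eq_getElem _ _ (by omega)]
          exact List.mem_toFinset.mpr (List.getElem_mem _)
        rwa [q.2.1.2] at this
      exact ⟨⟨⟨q.1.1.getD j ∅, hmem⟩, ⟨⟨q.1.1, ⟨q.2.1, rfl⟩⟩, ⟨q.1.2, q.2.2⟩⟩⟩, Subtype.ext rfl⟩
  rw [hcongr, nat_card_sigma']
  have hterm : ∀ b : {x // x ∈ P.parts},
      Nat.card (EnumAt P.parts j ∅ b.1 × {y : Fin n // y ∈ b.1}) =
        (P.parts.card - 1)! * (b.1 : Finset (Fin n)).card := by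
    intro b
    rw [Nat.card_prod, nat_card_enumAt P.parts h ∅ b.2, Nat.card_eq_fintype_card,
      Fintype.card_coe]
  rw [Finset.sum_congr rfl (fun b _ => hterm b)]
  rw [Finset.sum_coe_sort P.parts (fun b => (P.parts.card - 1)! * b.card), ← Finset.mul_sum,
    P.sum_card_parts]
  simp

end Fib

private def toSigma (n r : ℕ)
    (p : {p : OrderedSetPartition (Finset.univ : Finset (Fin n)) × Fin n //
        p.2 ∈ p.1.1.getD (r - 1) ∅}) :
    Σ P : Finpartition (Finset.univ : Finset (Fin n)), Fib n (r - 1) P :=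
  ⟨ospPartition p.1.1.1 p.1.1.2, ⟨(p.1.1.1, p.1.2), ⟨⟨osp_nodup p.1.1.2, rfl⟩, p.2⟩⟩⟩

/-- **Rank distribution in a random hierarchy (labeled case).** For `1 ≤ r ≤ n`, the number
of pairs `(X, x)` where `X` is an ordered set partition of an `n`-element set and `x` is an
element of its `r`-th block equals `n·∑_{i=r}^{n} (i−1)!·S(n,i)`.  (Blocks are indexed from
`1`, so the `r`-th block is entry `r−1` of the list; membership in `getD (r-1) ∅` forces the
height to be at least `r`.) -/
theorem rank_count_labeled (n r : ℕ) (hr : 1 ≤ r) (hrn : r ≤ n) :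
    Nat.card {p : OrderedSetPartition (Finset.univ : Finset (Fin n)) × Fin n //
        p.2 ∈ p.1.1.getD (r - 1) ∅} =
      n * ∑ i ∈ Finset.Icc r n, (i - 1)! * stirling2 n i := by
  classical
  have h1 : Nat.card {p : OrderedSetPartition (Finset.univ : Finset (Fin n)) × Fin n //
        p.2 ∈ p.1.1.getD (r - 1) ∅} =
      ∑ P : Finpartition (Finset.univ : Finset (Fin n)), Nat.card (Fib n (r - 1) P) := by
    rw [← nat_card_sigma']
    apply Nat.card_eq_of_bijective (toSigma n r)
    constructor
    · intro a b h
      have h1 : (a.1.1.1, a.1.2) = (b.1.1.1, b.1.2) :=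
        congrArg (fun q : Σ P : Finpartition (Finset.univ : Finset (Fin n)),
          Fib n (r - 1) P => q.2.1) h
      have hl : a.1.1.1 = b.1.1.1 :=
        congrArg (fun z : List (Finset (Fin n)) × Fin n => z.1) h1
      have hx : a.1.2 = b.1.2 :=
        congrArg (fun z : List (Finset (Fin n)) × Fin n => z.2) h1
      exact Subtype.ext (Prod.ext (Subtype.ext hl) hx)
    · rintro ⟨P, ⟨⟨l, x⟩, ⟨⟨hnd, htf⟩, hx⟩⟩⟩
      have hosp : IsOrderedSetPartition (Finset.univ : Finset (Fin n)) l :=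
        isOSP_of_enum P hnd htf
      have hP : ospPartition l hosp = P := Finpartition.ext htf
      refine ⟨⟨⟨⟨l, hosp⟩, x⟩, hx⟩, ?_⟩
      subst hP
      exact congrArg (Sigma.mk _) (Subtype.ext rfl)
  have h2 : ∀ P : Finpartition (Finset.univ : Finset (Fin n)),
      Nat.card (Fib n (r - 1) P) =
        if r ≤ P.parts.card then (P.parts.card - 1)! * n else 0 := by
    intro P
    split
    · exact nat_card_fib_ge n (r - 1) P (by omega)
    · exact nat_card_fib_lt n (r - 1) P (by omega)
  rw [h1, Finset.sum_congr rfl (fun P _ => h2 P), Finset.sum_ite, Finset.sum_const_zero, add_zero]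
  have hmaps : ∀ P ∈ Finset.univ.filter
      (fun P : Finpartition (Finset.univ : Finset (Fin n)) => r ≤ P.parts.card),
      P.parts.card ∈ Finset.Icc r n := by
    intro P hP
    have h1 := (Finset.mem_filter.mp hP).2
    have h2 : P.parts.card ≤ n := by
      have := P.card_parts_le_card
      simpa using this
    exact Finset.mem_Icc.mpr ⟨h1, h2⟩
  rw [← Finset.sum_fiberwise_of_maps_to hmaps, Finset.mul_sum]
  apply Finset.sum_congr rfl
  intro i hi
  have hri : r ≤ i := (Finset.mem_Icc.mp hi).1
  have hfil : (Finset.univ.filter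
        (fun P : Finpartition (Finset.univ : Finset (Fin n)) => r ≤ P.parts.card)).filter
        (fun P => P.parts.card = i) =
      Finset.univ.filter
        (fun P : Finpartition (Finset.univ : Finset (Fin n)) => P.parts.card = i) := by
    ext P
    simp only [Finset.mem_filter, Finset.mem_univ, true_and]
    constructor
    · exact And.right
    · intro h'; exact ⟨by omega, h'⟩
  rw [hfil]
  have hconst : ∀ P ∈ Finset.univ.filter
      (fun P : Finpartition (Finset.univ : Finset (Fin n)) => P.parts.card = i),
      (P.parts.card - 1)! * n = (i - 1)! * n := by
    intro P hP
    rw [(Finset.mem_filter.mp hP).2]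
  rw [Finset.sum_congr rfl hconst, Finset.sum_const, smul_eq_mul]
  have hst : stirling2 n i = (Finset.univ.filter
      (fun P : Finpartition (Finset.univ : Finset (Fin n)) => P.parts.card = i)).card := by
    rw [stirling2, Nat.card_eq_fintype_card, Fintype.card_subtype]
  rw [hst]
  ring
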